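/- For every integer n ≥ 4, the Waldschmidt constant of I_{B_n} equals n/(n−2); that is, the sequence α_{n,m}/m converges, as m → ∞, to n/(n−2). -/

import Mathlib

open MvPolynomial
open Fin.NatCast

/-- The subtree (arc) of `n-2` consecutive cycle vertices of the `n`-cycle `Q_n`
(on vertices `1,…,n` inside `Fin (n+2)`), starting at vertex `i+1`, for `i = 0,…,n-1`.
The family `arcT n i`, `i < n`, is exactly the family `𝒯` of subtrees of `Q_n`
with `n-2` vertices. -/
def arcT (n i : ℕ) : Finset (Fin (n + 2)) :=
  (Finset.range (n - 2)).image fun t => (((i + t) % n + 1 : ℕ) : Fin (n + 2))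

/-- The monomial prime ideal `⟨x_v⟩ + ⟨x_j : j ∈ S⟩`. -/
noncomputable def apexIdeal (K : Type*) [Field K] (n : ℕ) (v : Fin (n + 2))
    (S : Finset (Fin (n + 2))) : Ideal (MvPolynomial (Fin (n + 2)) K) :=
  Ideal.span (insert (X v) (X '' (S : Set (Fin (n+2))) : Set (MvPolynomial (Fin (n + 2)) K)))

/-- The `m`-th symbolic power `I_{B_n}^{(m)} = ⋂_{S ∈ 𝒯} (I_{[0,S]}^m ∩ I_{[n+1,S]}^m)`. -/
noncomputable def symbPow (K : Type*) [Field K] (n m : ℕ) : Ideal (MvPolynomial (Fin (n + 2)) K) :=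
  ⨅ i ∈ Finset.range n,
    apexIdeal K n 0 (arcT n i) ^ m ⊓ apexIdeal K n ((n + 1 : ℕ) : Fin (n + 2)) (arcT n i) ^ m

/-- The monomial `x_0^{a_0} x_1^{a_1} ⋯ x_{n+1}^{a_{n+1}}`. -/
noncomputable def monom (K : Type*) [Field K] (n : ℕ) (a : Fin (n + 2) → ℕ) :
    MvPolynomial (Fin (n + 2)) K :=
  ∏ i, X i ^ a i

/-- `α_{n,m}`: the least total degree of a monomial lying in `I_{B_n}^{(m)}`. -/
noncomputable def alphaSymb (K : Type*) [Field K] (n m : ℕ) : ℕ :=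
  sInf {d | ∃ a : Fin (n + 2) → ℕ, (∑ i, a i) = d ∧ monom K n a ∈ symbPow K n m}

/- ### Auxiliary lemmas -/

section Aux
open Finset

lemma sum_rot1 (f : ℕ → ℕ) (n : ℕ) (hn : 0 < n) :
    ∑ i ∈ range n, f ((i + 1) % n) = ∑ i ∈ range n, f (i % n) := by
  obtain ⟨k, rfl⟩ : ∃ k, n = k + 1 := ⟨n - 1, by omega⟩
  have L : ∑ i ∈ range (k+1), f ((i+1)%(k+1)) = (∑ i ∈ range k, f (i+1)) + f 0 := by
    rw [Finset.sum_range_succ, Nat.mod_self]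
    congr 1
    apply Finset.sum_congr rfl; intro i hi; rw [Finset.mem_range] at hi
    rw [Nat.mod_eq_of_lt (by omega)]
  have R : ∑ i ∈ range (k+1), f (i%(k+1)) = (∑ i ∈ range k, f (i+1)) + f 0 := by
    have h : ∑ i ∈ range (k+1), f (i%(k+1)) = ∑ i ∈ range (k+1), f i := by
      apply Finset.sum_congr rfl; intro i hi; rw [Finset.mem_range] at hi
      rw [Nat.mod_eq_of_lt hi]
    rw [h, Finset.sum_range_succ']
  rw [L, R]

lemma sum_rot (f : ℕ → ℕ) (n t : ℕ) (hn : 0 < n) :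
    ∑ i ∈ range n, f ((i + t) % n) = ∑ i ∈ range n, f (i % n) := by
  induction t with
  | zero => simp
  | succ t ih =>
    have h0 : ∀ i, f ((i + (t+1)) % n) = (fun j => f ((j + t) % n)) ((i + 1) % n) := by
      intro i; simp only [Nat.mod_add_mod]; ring_nf
    rw [Finset.sum_congr rfl (fun i _ => h0 i), sum_rot1 (fun j => f ((j + t) % n)) n hn]
    calc ∑ i ∈ range n, f ((i % n + t) % n) = ∑ i ∈ range n, f ((i + t) % n) := by
          apply Finset.sum_congr rfl; intro i hi; rw [Finset.mem_range] at hi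
          rw [Nat.mod_eq_of_lt hi]
      _ = _ := ih

lemma prod_pow_mem_pow {R ι : Type*} [CommRing R] (P : Ideal R) (s : Finset ι)
    (f : ι → R) (e : ι → ℕ) (h : ∀ i ∈ s, f i ∈ P) :
    (∏ i ∈ s, f i ^ e i) ∈ P ^ (∑ i ∈ s, e i) := by
  classical
  induction s using Finset.cons_induction with
  | empty => simp [Ideal.one_eq_top]
  | cons a s ha ih =>
    rw [Finset.prod_cons, Finset.sum_cons, pow_add]
    exact Ideal.mul_mem_mul (Ideal.pow_mem_pow (h a (Finset.mem_cons_self a s)) _)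
      (ih fun i hi => h i (Finset.mem_cons_of_mem hi))

lemma monom_mem_pow_iff {K : Type*} [Field K] {σ : Type*} [Fintype σ] [DecidableEq σ]
    (T : Finset σ) (a : σ → ℕ) (m : ℕ) :
    (∏ i, (X i : MvPolynomial σ K) ^ a i) ∈ (Ideal.span (X '' (T : Set σ)))^m ↔
      m ≤ ∑ j ∈ T, a j := by
  constructor
  · intro h
    set φ := (aeval (fun i : σ => if i ∈ T then (Polynomial.X : Polynomial K) else 1) :
      MvPolynomial σ K →ₐ[K] Polynomial K)
    have hmap : Ideal.map φ.toRingHom (Ideal.span (X '' (T : Set σ)) ^ m)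
        ≤ (Ideal.span {(Polynomial.X : Polynomial K)}) ^ m := by
      rw [Ideal.map_pow]
      apply Ideal.pow_right_mono
      rw [Ideal.map_le_iff_le_comap, Ideal.span_le]
      rintro p ⟨j, hj, rfl⟩
      rw [SetLike.mem_coe, Ideal.mem_comap]
      show φ (X j) ∈ Ideal.span {(Polynomial.X : Polynomial K)}
      have : φ (X j) = Polynomial.X := by
        simp [φ, Finset.mem_coe.mp hj]
      rw [this]
      exact Ideal.subset_span rfl
    have hmem : φ (∏ i, (X i : MvPolynomial σ K) ^ a i)
        ∈ (Ideal.span {(Polynomial.X : Polynomial K)}) ^ m :=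
      hmap (Ideal.mem_map_of_mem _ h)
    have heval : φ (∏ i, (X i : MvPolynomial σ K) ^ a i)
        = Polynomial.X ^ (∑ j ∈ T, a j) := by
      rw [map_prod]
      have : ∀ i, φ (X i ^ a i) = Polynomial.X ^ (if i ∈ T then a i else 0) := by
        intro i
        rw [map_pow, aeval_X]
        split_ifs with h
        · rfl
        · simp
      rw [Finset.prod_congr rfl (fun i _ => this i), Finset.prod_pow_eq_pow_sum]
      congr 1
      rw [Finset.sum_ite_mem, Finset.univ_inter]
    rw [heval, Ideal.span_singleton_pow, Ideal.mem_span_singleton] at hmem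
    by_contra hc
    push_neg at hc
    have := (Polynomial.X_pow_dvd_iff.mp hmem) _ hc
    simp [Polynomial.coeff_X_pow] at this
  · intro h
    rw [← Finset.prod_mul_prod_compl T (fun i => (X i : MvPolynomial σ K) ^ a i)]
    apply Ideal.mul_mem_right
    refine Ideal.pow_le_pow_right h ?_
    exact prod_pow_mem_pow _ _ _ _ (fun i hi => Ideal.subset_span ⟨i, hi, rfl⟩)

lemma val_cast_lt {n k : ℕ} (h : k < n + 2) : ((k : ℕ) : Fin (n+2)).val = k := by
  rw [Fin.val_natCast]; exact Nat.mod_eq_of_lt h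

lemma arc_val {n i t : ℕ} (hn : 0 < n) :
    ((((i + t) % n + 1 : ℕ)) : Fin (n+2)).val = (i + t) % n + 1 :=
  val_cast_lt (by have := Nat.mod_lt (i + t) hn; omega)

lemma zero_not_mem_arcT {n i : ℕ} (hn : 0 < n) : (0 : Fin (n+2)) ∉ arcT n i := by
  simp only [arcT, Finset.mem_image, Finset.mem_range, not_exists]
  rintro t ⟨ht, heq⟩
  have hv := congrArg Fin.val heq
  rw [arc_val hn] at hv
  simp at hv

lemma last_not_mem_arcT {n i : ℕ} (hn : 0 < n) :
    (((n + 1 : ℕ)) : Fin (n+2)) ∉ arcT n i := by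
  simp only [arcT, Finset.mem_image, Finset.mem_range, not_exists]
  rintro t ⟨ht, heq⟩
  have hv := congrArg Fin.val heq
  rw [arc_val hn, val_cast_lt (by omega)] at hv
  have := Nat.mod_lt (i + t) hn
  omega

lemma arc_injOn {n i : ℕ} (hn : 4 ≤ n) : ∀ t1 ∈ Finset.range (n-2), ∀ t2 ∈ Finset.range (n-2),
    ((((i + t1) % n + 1 : ℕ)) : Fin (n+2)) = (((i + t2) % n + 1 : ℕ) : Fin (n+2)) → t1 = t2 := by
  intro t1 h1 t2 h2 heq
  rw [Finset.mem_range] at h1 h2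
  have hn0 : 0 < n := by omega
  have hv := congrArg Fin.val heq
  rw [arc_val hn0, arc_val hn0] at hv
  have hmod : (i + t1) % n = (i + t2) % n := by omega
  have hME : t1 ≡ t2 [MOD n] := Nat.ModEq.add_left_cancel' i hmod
  have : t1 % n = t2 % n := hME
  rw [Nat.mod_eq_of_lt (by omega), Nat.mod_eq_of_lt (by omega)] at this
  exact this

lemma sum_arcT {n i : ℕ} (hn : 4 ≤ n) (a : Fin (n+2) → ℕ) :
    ∑ j ∈ arcT n i, a j = ∑ t ∈ Finset.range (n-2), a ((((i + t) % n + 1 : ℕ)) : Fin (n+2)) := by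
  unfold arcT
  exact Finset.sum_image (arc_injOn hn)

lemma sum_sum_arcT {n : ℕ} (hn : 4 ≤ n) (a : Fin (n+2) → ℕ) :
    ∑ i ∈ Finset.range n, ∑ j ∈ arcT n i, a j
      = (n - 2) * ∑ k ∈ Finset.range n, a (((k + 1 : ℕ)) : Fin (n+2)) := by
  have hn0 : 0 < n := by omega
  calc ∑ i ∈ Finset.range n, ∑ j ∈ arcT n i, a j
      = ∑ i ∈ Finset.range n, ∑ t ∈ Finset.range (n-2),
          (fun r => a (((r + 1 : ℕ)) : Fin (n+2))) ((i + t) % n) :=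
        Finset.sum_congr rfl (fun i _ => sum_arcT hn a)
    _ = ∑ t ∈ Finset.range (n-2), ∑ i ∈ Finset.range n,
          (fun r => a (((r + 1 : ℕ)) : Fin (n+2))) ((i + t) % n) := Finset.sum_comm
    _ = ∑ t ∈ Finset.range (n-2), ∑ i ∈ Finset.range n,
          (fun r => a (((r + 1 : ℕ)) : Fin (n+2))) (i % n) :=
        Finset.sum_congr rfl (fun t _ => sum_rot (fun r => a (((r + 1 : ℕ)) : Fin (n+2))) n t hn0)
    _ = ∑ t ∈ Finset.range (n-2), ∑ i ∈ Finset.range n, a (((i + 1 : ℕ)) : Fin (n+2)) := by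
        apply Finset.sum_congr rfl; intro t _
        apply Finset.sum_congr rfl; intro i hi
        rw [Finset.mem_range] at hi
        simp only [Nat.mod_eq_of_lt hi]
    _ = (n - 2) * ∑ k ∈ Finset.range n, a (((k + 1 : ℕ)) : Fin (n+2)) := by
        rw [Finset.sum_const, Finset.card_range, smul_eq_mul]

lemma sum_univ_decomp {n : ℕ} (a : Fin (n+2) → ℕ) :
    ∑ j : Fin (n+2), a j
      = a 0 + a (((n + 1 : ℕ)) : Fin (n+2)) + ∑ k ∈ Finset.range n, a (((k + 1 : ℕ)) : Fin (n+2)) := by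
  have h : ∑ j : Fin (n+2), a j = ∑ k ∈ Finset.range (n+2), a ((k : ℕ) : Fin (n+2)) := by
    rw [← Fin.sum_univ_eq_sum_range (fun k => a ((k : ℕ) : Fin (n+2))) (n+2)]
    apply Finset.sum_congr rfl
    intro i _
    rw [Fin.cast_val_eq_self]
  rw [h, Finset.sum_range_succ, Finset.sum_range_succ']
  have h0 : ((0 : ℕ) : Fin (n+2)) = 0 := by simp
  rw [h0]
  omega

lemma apexIdeal_eq (K : Type*) [Field K] (n : ℕ) (v : Fin (n + 2)) (S : Finset (Fin (n + 2))) :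
    apexIdeal K n v S
      = Ideal.span (X '' ((insert v S : Finset (Fin (n+2))) : Set (Fin (n+2)))) := by
  rw [Finset.coe_insert, Set.image_insert_eq]
  rfl

lemma monom_mem_symbPow_iff (K : Type*) [Field K] (n m : ℕ) (a : Fin (n+2) → ℕ) :
    monom K n a ∈ symbPow K n m ↔ ∀ i ∈ Finset.range n,
      m ≤ ∑ j ∈ insert (0 : Fin (n+2)) (arcT n i), a j ∧
      m ≤ ∑ j ∈ insert (((n + 1 : ℕ)) : Fin (n+2)) (arcT n i), a j := by
  unfold symbPow monom
  simp only [Submodule.mem_iInf, Submodule.mem_inf, apexIdeal_eq, monom_mem_pow_iff]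

end Aux

theorem test_true : True := trivial

section Main
open Finset

/-- Witness exponent vector: `c = m/(n-2)+1` on each cycle vertex, `0` on the apexes. -/
def wA (n m : ℕ) : Fin (n+2) → ℕ :=
  fun j => if (j : ℕ) = 0 ∨ (j : ℕ) = n + 1 then 0 else m / (n-2) + 1

lemma wA_zero (n m : ℕ) : wA n m 0 = 0 := by simp [wA]

lemma wA_last (n m : ℕ) (hn : 4 ≤ n) : wA n m (((n + 1 : ℕ)) : Fin (n+2)) = 0 := by
  unfold wA
  rw [if_pos]
  right
  exact val_cast_lt (by omega)

lemma wA_cycle (n m : ℕ) {k : ℕ} (h1 : 1 ≤ k) (h2 : k ≤ n) :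
    wA n m ((k : ℕ) : Fin (n+2)) = m / (n-2) + 1 := by
  unfold wA
  rw [if_neg]
  rw [val_cast_lt (by omega)]
  omega

lemma arcSum_wA {n m i : ℕ} (hn : 4 ≤ n) :
    ∑ j ∈ arcT n i, wA n m j = (n-2) * (m / (n-2) + 1) := by
  have hn0 : 0 < n := by omega
  rw [sum_arcT hn]
  have h : ∀ t ∈ range (n-2), wA n m ((((i + t) % n + 1 : ℕ)) : Fin (n+2)) = m / (n-2) + 1 := by
    intro t _
    have := Nat.mod_lt (i + t) hn0
    exact wA_cycle n m (by omega) (by omega)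
  rw [Finset.sum_congr rfl h, Finset.sum_const, Finset.card_range, smul_eq_mul]

lemma le_arcSum {n m : ℕ} (hn : 4 ≤ n) : m ≤ (n-2) * (m / (n-2) + 1) := by
  have hd := Nat.div_add_mod m (n-2)
  have hr : m % (n-2) < n - 2 := Nat.mod_lt _ (by omega)
  rw [Nat.mul_succ]
  omega

lemma wA_mem {K : Type*} [Field K] {n m : ℕ} (hn : 4 ≤ n) :
    monom K n (wA n m) ∈ symbPow K n m := by
  have hn0 : 0 < n := by omega
  rw [monom_mem_symbPow_iff]
  intro i _
  constructor
  · rw [Finset.sum_insert (zero_not_mem_arcT hn0), wA_zero, arcSum_wA hn, zero_add]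
    exact le_arcSum hn
  · rw [Finset.sum_insert (last_not_mem_arcT hn0), wA_last n m hn, arcSum_wA hn, zero_add]
    exact le_arcSum hn

lemma wA_deg {n m : ℕ} (hn : 4 ≤ n) :
    ∑ j : Fin (n+2), wA n m j = n * (m / (n-2) + 1) := by
  rw [sum_univ_decomp, wA_zero, wA_last n m hn]
  have h : ∀ k ∈ range n, wA n m (((k + 1 : ℕ)) : Fin (n+2)) = m / (n-2) + 1 := by
    intro k hk
    rw [Finset.mem_range] at hk
    exact wA_cycle n m (by omega) (by omega)
  rw [Finset.sum_congr rfl h, Finset.sum_const, Finset.card_range, smul_eq_mul]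
  omega

lemma alpha_le {K : Type*} [Field K] {n : ℕ} (hn : 4 ≤ n) (m : ℕ) :
    alphaSymb K n m ≤ n * (m / (n-2) + 1) :=
  Nat.sInf_le ⟨wA n m, wA_deg hn, wA_mem hn⟩

lemma alpha_ge {K : Type*} [Field K] {n : ℕ} (hn : 4 ≤ n) (m : ℕ) :
    n * m ≤ (n - 2) * alphaSymb K n m := by
  have hn0 : 0 < n := by omega
  have hle : n ≤ 2 * (n-2) := by omega
  have hne : {d | ∃ a : Fin (n + 2) → ℕ, (∑ i, a i) = d ∧ monom K n a ∈ symbPow K n m}.Nonempty :=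
    ⟨n * (m / (n-2) + 1), wA n m, wA_deg hn, wA_mem hn⟩
  obtain ⟨a, hd, hm⟩ := Nat.sInf_mem hne
  rw [monom_mem_symbPow_iff] at hm
  set σ := ∑ k ∈ range n, a (((k + 1 : ℕ)) : Fin (n+2)) with hσ
  set a0 := a 0 with ha0
  set aN := a (((n + 1 : ℕ)) : Fin (n+2)) with haN
  have h1 : n * m ≤ n * a0 + (n-2) * σ := by
    calc n * m = ∑ _i ∈ range n, m := by rw [Finset.sum_const, Finset.card_range, smul_eq_mul]
    _ ≤ ∑ i ∈ range n, (a0 + ∑ j ∈ arcT n i, a j) := Finset.sum_le_sum (fun i hi => by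
        have h := (hm i hi).1
        rwa [Finset.sum_insert (zero_not_mem_arcT hn0)] at h)
    _ = n * a0 + ∑ i ∈ range n, ∑ j ∈ arcT n i, a j := by
        rw [Finset.sum_add_distrib, Finset.sum_const, Finset.card_range, smul_eq_mul]
    _ = n * a0 + (n-2) * σ := by rw [sum_sum_arcT hn a]
  have h2 : n * m ≤ n * aN + (n-2) * σ := by
    calc n * m = ∑ _i ∈ range n, m := by rw [Finset.sum_const, Finset.card_range, smul_eq_mul]
    _ ≤ ∑ i ∈ range n, (aN + ∑ j ∈ arcT n i, a j) := Finset.sum_le_sum (fun i hi => by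
        have h := (hm i hi).2
        rwa [Finset.sum_insert (last_not_mem_arcT hn0)] at h)
    _ = n * aN + ∑ i ∈ range n, ∑ j ∈ arcT n i, a j := by
        rw [Finset.sum_add_distrib, Finset.sum_const, Finset.card_range, smul_eq_mul]
    _ = n * aN + (n-2) * σ := by rw [sum_sum_arcT hn a]
  have hdeg : alphaSymb K n m = a0 + aN + σ := by
    rw [alphaSymb, ← hd, sum_univ_decomp]
  clear_value σ a0 aN
  rw [hdeg]
  have e1 : n * a0 ≤ 2 * ((n-2) * a0) := by
    calc n * a0 ≤ (2 * (n-2)) * a0 := Nat.mul_le_mul hle (le_refl a0)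
    _ = 2 * ((n-2) * a0) := by ring
  have e2 : n * aN ≤ 2 * ((n-2) * aN) := by
    calc n * aN ≤ (2 * (n-2)) * aN := Nat.mul_le_mul hle (le_refl aN)
    _ = 2 * ((n-2) * aN) := by ring
  have h3 : 2 * (n * m) ≤ 2 * ((n-2) * (a0 + aN + σ)) := by
    calc 2 * (n * m) = n * m + n * m := by ring
    _ ≤ (n * a0 + (n-2) * σ) + (n * aN + (n-2) * σ) := Nat.add_le_add h1 h2
    _ ≤ (2 * ((n-2) * a0) + (n-2) * σ) + (2 * ((n-2) * aN) + (n-2) * σ) :=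
        Nat.add_le_add (Nat.add_le_add_right e1 _) (Nat.add_le_add_right e2 _)
    _ = 2 * ((n-2) * (a0 + aN + σ)) := by ring
  exact Nat.le_of_mul_le_mul_left h3 (by norm_num)

end Main

/-- The Stanley–Reisner ideal `I_{B_n}` of the bipyramid `B_n`, presented by its
quadratic generators: `x_0 x_{n+1}` together with `x_i x_j` for non-adjacent
vertices `i, j` of the cycle `Q_n`. -/
noncomputable def bipyrIdeal (K : Type*) [Field K] (n : ℕ) : Ideal (MvPolynomial (Fin (n + 2)) K) :=
  Ideal.span ({X (0 : Fin (n + 2)) * X ((n + 1 : ℕ) : Fin (n + 2))} ∪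
    {p | ∃ i j : ℕ, 1 ≤ i ∧ i ≤ n ∧ 1 ≤ j ∧ j ≤ n ∧ i ≠ j ∧
      j ≠ i % n + 1 ∧ i ≠ j % n + 1 ∧
      p = X ((i : ℕ) : Fin (n + 2)) * X ((j : ℕ) : Fin (n + 2))})

/-- The Waldschmidt constant of `I_{B_n}`:
`γ(I_{B_n}) = lim_{m→∞} α_{n,m}/m = n/(n-2)` for every `n ≥ 4`. -/
theorem waldschmidt_constant_bipyramid (K : Type*) [Field K] (n : ℕ) (hn : 4 ≤ n) :
    Filter.Tendsto (fun m : ℕ => (alphaSymb K n m : ℝ) / (m : ℝ)) Filter.atTop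
      (nhds ((n : ℝ) / ((n : ℝ) - 2))) := by
  have hn4 : (4:ℝ) ≤ (n:ℝ) := by exact_mod_cast hn
  have hn2 : (0:ℝ) < (n:ℝ) - 2 := by linarith
  have hcast : ((n - 2 : ℕ) : ℝ) = (n:ℝ) - 2 := by
    have : (2:ℕ) ≤ n := by omega
    push_cast [Nat.cast_sub this]
    ring
  apply tendsto_of_tendsto_of_tendsto_of_le_of_le' (g := fun _ : ℕ => (n:ℝ)/((n:ℝ)-2))
    (h := fun m : ℕ => (n:ℝ)/((n:ℝ)-2) + (n:ℝ)/(m:ℝ))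
  · exact tendsto_const_nhds
  · have h0 : Filter.Tendsto (fun m : ℕ => (n:ℝ)/(m:ℝ)) Filter.atTop (nhds 0) :=
      tendsto_const_div_atTop_nhds_zero_nat _
    simpa using tendsto_const_nhds.add h0
  · filter_upwards [Filter.eventually_ge_atTop 1] with m hm
    have hm0 : (0:ℝ) < (m:ℝ) := by exact_mod_cast hm
    have h := alpha_ge (K := K) hn m
    have h' : (n:ℝ) * m ≤ ((n:ℝ) - 2) * (alphaSymb K n m : ℝ) := by
      have := (Nat.cast_le (α := ℝ)).mpr h
      push_cast at this
      rwa [hcast] at this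
    rw [div_le_div_iff₀ hn2 hm0]
    linarith
  · filter_upwards [Filter.eventually_ge_atTop 1] with m hm
    have hm0 : (0:ℝ) < (m:ℝ) := by exact_mod_cast hm
    have h := alpha_le (K := K) hn m
    have h' : (alphaSymb K n m : ℝ) ≤ (n:ℝ) * ((m:ℝ)/((n:ℝ)-2) + 1) := by
      have h1 : (alphaSymb K n m : ℝ) ≤ (n:ℝ) * (((m / (n-2) : ℕ) : ℝ) + 1) := by
        exact_mod_cast h
      have h2 : ((m / (n-2) : ℕ) : ℝ) ≤ (m:ℝ)/((n:ℝ)-2) := by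
        have h4 : ((m / (n-2) : ℕ) : ℝ) ≤ (m:ℝ) / ((n - 2 : ℕ) : ℝ) := Nat.cast_div_le
        rwa [hcast] at h4
      nlinarith
    have h3 : (alphaSymb K n m : ℝ) / m ≤ ((n:ℝ) * ((m:ℝ)/((n:ℝ)-2) + 1)) / m := by
      gcongr
    refine h3.trans (le_of_eq ?_)
    field_simp
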